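/- Let g : ℕ → [0,∞) be Leibnizian with admissible sequence 𝒥 = (J_k)_{k≥1}, and suppose ω(g,𝒥) > 0. Then there is a family (ρ_N)_{N⊆ℕ}, indexed by all subsets N of ℕ, of sequences ρ_N : ℕ → ℝ with |ρ_N(n)| ≤ 1 for all n, such that ‖M_{ρ_N}(g)‖_𝔹 ≤ α(g,𝒥) for every N ⊆ ℕ, and ‖M_{ρ_N}(g) − M_{ρ_M}(g)‖_𝔹 ≥ ω(g,𝒥) whenever N ≠ M. In particular, the set {M_{ρ_N}(g) : N ⊆ ℕ} is uncountable. -/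

import Mathlib

open Filter ENNReal
open scoped Classical

noncomputable section

/-- Coordinate projection onto a finite set of indices. -/
def proj (A : Finset ℕ) (f : ℕ → ℝ) : ℕ → ℝ := fun n => if n ∈ A then f n else 0

/-- Coordinate projection onto a set of indices. -/
def projSet (A : Set ℕ) (f : ℕ → ℝ) : ℕ → ℝ := fun n => if n ∈ A then f n else 0

/-- `𝟙*_A(f) = ∑_{n ∈ A} f n`. -/
def oneStar (f : ℕ → ℝ) (A : Finset ℕ) : ℝ := ∑ n ∈ A, f n

/-- `A` is a greedy set of `f`. -/
def GreedySet (f : ℕ → ℝ) (A : Finset ℕ) : Prop :=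
  ∀ n ∈ A, ∀ k, k ∉ A → |f k| ≤ |f n|

/-- `β(f,A) = sup_{I ∈ ℐ} |𝟙*_{I∖A}(f)| ∈ [0,∞]`, the sup running over all finite
integer intervals `I = [a,b]`. -/
def beta (f : ℕ → ℝ) (A : Finset ℕ) : ℝ≥0∞ :=
  ⨆ a : ℕ, ⨆ b : ℕ, ENNReal.ofReal |oneStar f (Finset.Icc a b \ A)|

/-- `‖f‖_𝔹 = sup_{A ∈ 𝒢(f)} β(f,A) ∈ [0,∞]`. -/
def BNorm (f : ℕ → ℝ) : ℝ≥0∞ :=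
  ⨆ A ∈ {A : Finset ℕ | GreedySet f A}, beta f A

/-- Membership in `𝔹`, i.e. `‖f‖_𝔹 < ∞`. -/
def MemB (f : ℕ → ℝ) : Prop := BNorm f < ⊤

/-- Membership in `c₀`. -/
def Memc0 (f : ℕ → ℝ) : Prop := Tendsto f atTop (nhds 0)

/-- Membership in `𝔹₀`. -/
def MemB0 (f : ℕ → ℝ) : Prop :=
  Memc0 f ∧ ∀ ε : ℝ, 0 < ε → ∃ A : Finset ℕ, GreedySet f A ∧
    ∀ B : Finset ℕ, GreedySet f B → A ⊆ B → beta f B < ENNReal.ofReal ε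

/-- The net `(𝟙*_A(f))_{A ∈ 𝒢(f)}`, directed by inclusion, converges to `s`. -/
def GreedyLim (f : ℕ → ℝ) (s : ℝ) : Prop :=
  ∀ ε : ℝ, 0 < ε → ∃ A : Finset ℕ, GreedySet f A ∧
    ∀ B : Finset ℕ, GreedySet f B → A ⊆ B → |oneStar f B - s| < ε

/-- Membership in `𝔸`. -/
def MemA (f : ℕ → ℝ) : Prop := Memc0 f ∧ ∃ s, GreedyLim f s

/-- `σ_g(f)`, the greedy sum of `f` (junk value `0` if the greedy net does not converge). -/
def sigmaG (f : ℕ → ℝ) : ℝ := if h : ∃ s, GreedyLim f s then h.choose else 0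

/-- `‖f‖_𝔸 = sup_{A ∈ 𝒢(f)} |σ_g(f) - 𝟙*_A(f)|`. -/
def ANorm (f : ℕ → ℝ) : ℝ≥0∞ :=
  ⨆ A ∈ {A : Finset ℕ | GreedySet f A}, ENNReal.ofReal |sigmaG f - oneStar f A|

/-- The series `∑_n f n` converges (in the ordered sense) to `s`. -/
def SeriesLim (f : ℕ → ℝ) (s : ℝ) : Prop :=
  Tendsto (fun m => ∑ n ∈ Finset.range m, f n) atTop (nhds s)

/-- Membership in `𝒔`: the series `∑_n f n` converges. -/
def MemSeries (f : ℕ → ℝ) : Prop := ∃ s, SeriesLim f s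

/-- `σ_s(f) = ∑_{n=0}^∞ f n` (junk value `0` if the series does not converge). -/
def sigmaS (f : ℕ → ℝ) : ℝ := if h : ∃ s, SeriesLim f s then h.choose else 0

/-- `‖f‖_𝒔 = sup_m |∑_{n = m}^∞ f n|`, expressed via `σ_s(f)` minus partial sums. -/
def sNorm (f : ℕ → ℝ) : ℝ≥0∞ :=
  ⨆ m : ℕ, ENNReal.ofReal |sigmaS f - ∑ n ∈ Finset.range m, f n|

/-- `D(f)(m)`: the `m`-th term (for `m ≥ 1`) of the nonincreasing rearrangement of `|f|`,
as an element of `[0,∞]`. -/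
def Drearr (f : ℕ → ℝ) (m : ℕ) : ℝ≥0∞ :=
  sInf {t : ℝ≥0∞ | {n : ℕ | t < ENNReal.ofReal |f n|}.Finite ∧
    {n : ℕ | t < ENNReal.ofReal |f n|}.ncard < m}

/-- `ρ_{1,∞}(f,k) = sup_{m ≥ 1} m · D(f)(m+k) ∈ [0,∞]`. Note `ρ_{1,∞}(f,0) = ‖f‖_{1,∞}`. -/
def rho (f : ℕ → ℝ) (k : ℕ) : ℝ≥0∞ :=
  ⨆ m : ℕ, ⨆ _ : 1 ≤ m, (m : ℝ≥0∞) * Drearr f (m + k)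

/-- Membership in `h_{1,∞}`: `lim_m m · D(f)(m) = 0`. -/
def Memh1inf (f : ℕ → ℝ) : Prop :=
  Tendsto (fun m : ℕ => (m : ℝ≥0∞) * Drearr f m) atTop (nhds 0)

/-- A sequence of nonempty finite integer intervals which is right-dominant:
`max J_k < min J_{k+1}` for all `k`. -/
def RightDominant (J : ℕ → Finset ℕ) : Prop :=
  (∀ k : ℕ, ∃ a b : ℕ, a ≤ b ∧ J k = Finset.Icc a b) ∧
  ∀ k : ℕ, ∀ n ∈ J k, ∀ m ∈ J (k + 1), n < m

/-- `g` is Leibnizian with admissible sequence `J`. -/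
def Admissible (g : ℕ → ℝ) (J : ℕ → Finset ℕ) : Prop :=
  RightDominant J ∧
  (∀ n : ℕ, g n ≠ 0 → ∃ k, n ∈ J k) ∧
  (∀ k : ℕ, oneStar g (J (k + 1)) ≤ oneStar g (J k)) ∧
  (∀ k : ℕ, ∀ n ∈ J k, g n ≠ 0 → ∀ m ∈ J (k + 1), g m < g n)

end
section MyAux

/-- sign pattern for a set of pair-indices -/
noncomputable def sgnN (N : Set ℕ) (j : ℕ) : ℝ :=
  if j / 2 ∈ N then (if j % 2 = 0 then 1 else -1) else 0

/-- the multiplier sequence -/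
noncomputable def rhoN (J : ℕ → Finset ℕ) (N : Set ℕ) (n : ℕ) : ℝ :=
  if h : ∃ j, n ∈ J j then sgnN N (Nat.find h) else 0

variable {g : ℕ → ℝ} {J : ℕ → Finset ℕ} {w : ℝ}

lemma aux_nonempty (hJ : Admissible g J) (k : ℕ) : (J k).Nonempty := by
  obtain ⟨a, b, hab, h⟩ := hJ.1.1 k
  exact h ▸ Finset.nonempty_Icc.mpr hab

lemma aux_lt (hJ : Admissible g J) : ∀ {j j' n m : ℕ}, j < j' → n ∈ J j → m ∈ J j' → n < m := by
  have key : ∀ d j n m, n ∈ J j → m ∈ J (j + d + 1) → n < m := by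
    intro d
    induction d with
    | zero => exact fun j n m hn hm => hJ.1.2 j n hn m hm
    | succ d ih =>
        intro j n m hn hm
        obtain ⟨p, hp⟩ := aux_nonempty hJ (j + d + 1)
        exact (ih j n p hn hp).trans (hJ.1.2 (j + d + 1) p hp m hm)
  intro j j' n m h hn hm
  have : j' = j + (j' - j - 1) + 1 := by omega
  exact key (j' - j - 1) j n m hn (this ▸ hm)

lemma aux_unique (hJ : Admissible g J) {j j' n : ℕ} (hn : n ∈ J j) (hn' : n ∈ J j') : j = j' := by
  by_contra h
  rcases Nat.lt_or_ge j j' with h1 | h1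
  · exact lt_irrefl n (aux_lt hJ h1 hn hn')
  · exact lt_irrefl n (aux_lt hJ (by omega) hn' hn)

lemma aux_le (hJ : Admissible g J) : ∀ {j n : ℕ}, n ∈ J j → j ≤ n := by
  intro j
  induction j with
  | zero => exact fun _ => Nat.zero_le _
  | succ j ih =>
      intro n hn
      obtain ⟨p, hp⟩ := aux_nonempty hJ j
      have := aux_lt hJ (Nat.lt_succ_self j) hp hn
      have := ih hp
      omega

lemma aux_anti (hJ : Admissible g J) {j j' : ℕ} (h : j ≤ j') :
    oneStar g (J j') ≤ oneStar g (J j) :=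
  antitone_nat_of_succ_le (f := fun k => oneStar g (J k)) hJ.2.2.1 h

lemma aux_w_le (hJ : Admissible g J)
    (hw : Tendsto (fun k => oneStar g (J k)) atTop (nhds w)) (j : ℕ) :
    w ≤ oneStar g (J j) :=
  le_of_tendsto hw (eventually_atTop.mpr ⟨j, fun _ hk => aux_anti hJ hk⟩)

lemma aux_exists_pos (hJ : Admissible g J)
    (hw : Tendsto (fun k => oneStar g (J k)) atTop (nhds w)) (hwpos : 0 < w) (j : ℕ) :
    ∃ n ∈ J j, 0 < g n := by
  have h : ∑ n ∈ J j, (0 : ℝ) < ∑ n ∈ J j, g n := by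
    rw [Finset.sum_const_zero]
    exact lt_of_lt_of_le hwpos (aux_w_le hJ hw j)
  exact Finset.exists_lt_of_sum_lt h

lemma aux_val_lt (hJ : Admissible g J)
    (hw : Tendsto (fun k => oneStar g (J k)) atTop (nhds w)) (hwpos : 0 < w) :
    ∀ {j j' n m : ℕ}, j < j' → n ∈ J j → g n ≠ 0 → m ∈ J j' → g m < g n := by
  have key : ∀ d j n m, n ∈ J j → g n ≠ 0 → m ∈ J (j + d + 1) → g m < g n := by
    intro d
    induction d with
    | zero => exact fun j n m hn hgn hm => hJ.2.2.2 j n hn hgn m hm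
    | succ d ih =>
        intro j n m hn hgn hm
        obtain ⟨p, hp, hgp⟩ := aux_exists_pos hJ hw hwpos (j + d + 1)
        exact (hJ.2.2.2 (j + d + 1) p hp (ne_of_gt hgp) m hm).trans (ih j n p hn hgn hp)
  intro j j' n m h hn hgn hm
  have : j' = j + (j' - j - 1) + 1 := by omega
  exact key (j' - j - 1) j n m hn hgn (this ▸ hm)

lemma sgnN_abs_le (N : Set ℕ) (j : ℕ) : |sgnN N j| ≤ 1 := by
  unfold sgnN
  split <;> [skip; simp]
  split <;> simp

lemma rhoN_abs_le (J : ℕ → Finset ℕ) (N : Set ℕ) (n : ℕ) : |rhoN J N n| ≤ 1 := by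
  unfold rhoN
  split
  · exact sgnN_abs_le N _
  · simp

lemma rhoN_mem (hJ : Admissible g J) (N : Set ℕ) {n j : ℕ} (hn : n ∈ J j) :
    rhoN J N n = sgnN N j := by
  unfold rhoN
  rw [dif_pos ⟨j, hn⟩]
  congr 1
  exact aux_unique hJ (Nat.find_spec (⟨j, hn⟩ : ∃ j, n ∈ J j)) hn

lemma rhoN_notmem {n : ℕ} (h : ∀ j, n ∉ J j) (N : Set ℕ) : rhoN J N n = 0 := by
  unfold rhoN
  rw [dif_neg]
  push_neg
  exact h

lemma sgnN_even (N : Set ℕ) (k : ℕ) :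
    sgnN N (2 * k) = if k ∈ N then 1 else 0 := by
  unfold sgnN
  have h1 : 2 * k / 2 = k := by omega
  have h2 : 2 * k % 2 = 0 := by omega
  rw [h1, h2]
  split <;> simp

lemma sgnN_odd (N : Set ℕ) (k : ℕ) :
    sgnN N (2 * k + 1) = if k ∈ N then -1 else 0 := by
  unfold sgnN
  have h1 : (2 * k + 1) / 2 = k := by omega
  have h2 : (2 * k + 1) % 2 = 1 := by omega
  rw [h1, h2]
  split <;> simp

lemma sum_range_pair (F : ℕ → ℝ) (n : ℕ) :
    ∑ j ∈ Finset.range (2 * n), F j = ∑ k ∈ Finset.range n, (F (2 * k) + F (2 * k + 1)) := by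
  induction n with
  | zero => simp
  | succ n ih =>
      have : 2 * (n + 1) = 2 * n + 1 + 1 := by omega
      rw [this, Finset.sum_range_succ, Finset.sum_range_succ, ih, Finset.sum_range_succ]
      ring

end MyAux

section MyCore

variable {g : ℕ → ℝ} {J : ℕ → Finset ℕ} {w : ℝ}

lemma sgnN_abs_used {N : Set ℕ} {j : ℕ} (h : j / 2 ∈ N) : |sgnN N j| = 1 := by
  unfold sgnN
  rw [if_pos h]
  split <;> simp

lemma aux_core (hg : ∀ n, 0 ≤ g n) (hJ : Admissible g J)
    (hw : Tendsto (fun k => oneStar g (J k)) atTop (nhds w)) (hwpos : 0 < w)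
    (N : Set ℕ) (A : Finset ℕ)
    (hA : GreedySet (fun n => rhoN J N n * g n) A) (a b : ℕ) :
    |oneStar (fun n => rhoN J N n * g n) (Finset.Icc a b \ A)| ≤ oneStar g (J 0) := by
  set f : ℕ → ℝ := fun n => rhoN J N n * g n with hf
  set T : Finset ℕ := Finset.Icc a b \ A with hT
  set c : ℕ → ℝ := fun j => oneStar g (J j) with hc
  have hcanti : ∀ {j j' : ℕ}, j ≤ j' → c j' ≤ c j := fun h => aux_anti hJ h
  have hc0pos : 0 < c 0 := lt_of_lt_of_le hwpos (aux_w_le hJ hw 0)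
  -- trivial case: A contains a zero of f
  by_cases hAz : ∃ n ∈ A, f n = 0
  · obtain ⟨n0, hn0, hfn0⟩ := hAz
    have hz : ∀ m, m ∉ A → f m = 0 := by
      intro m hm
      have h1 := hA n0 hn0 m hm
      rw [hfn0, abs_zero] at h1
      exact abs_eq_zero.mp (le_antisymm h1 (abs_nonneg _))
    have hzero : oneStar f T = 0 :=
      Finset.sum_eq_zero (fun n hn => hz n (Finset.mem_sdiff.mp hn).2)
    rw [hzero, abs_zero]; exact le_of_lt hc0pos
  push_neg at hAz
  set t : ℕ → ℝ := fun j => ∑ n ∈ T ∩ J j, g n with htdef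
  have ht_nonneg : ∀ j, 0 ≤ t j := fun j => Finset.sum_nonneg (fun n _ => hg n)
  have ht_le : ∀ j, t j ≤ c j := fun j =>
    Finset.sum_le_sum_of_subset_of_nonneg Finset.inter_subset_right (fun n _ _ => hg n)
  have ht_wit : ∀ j, t j ≠ 0 → ∃ n, n ∈ T ∧ n ∈ J j ∧ 0 < g n := by
    intro j htj
    by_contra hcon
    push_neg at hcon
    apply htj
    apply Finset.sum_eq_zero
    intro n hn
    obtain ⟨hn1, hn2⟩ := Finset.mem_inter.mp hn
    rcases (hg n).lt_or_eq with h | h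
    · linarith [hcon n hn1 hn2]
    · exact h.symm
  have habs : ∀ n, |f n| ≤ g n := by
    intro n
    calc |f n| = |rhoN J N n| * g n := by rw [hf]; rw [abs_mul, abs_of_nonneg (hg n)]
      _ ≤ 1 * g n := mul_le_mul_of_nonneg_right (rhoN_abs_le _ _ _) (hg n)
      _ = g n := one_mul _
  have hfabs_used : ∀ {n j : ℕ}, n ∈ J j → j / 2 ∈ N → |f n| = g n := by
    intro n j hn hu
    rw [hf]
    show |rhoN J N n * g n| = g n
    rw [rhoN_mem hJ N hn, abs_mul, sgnN_abs_used hu, one_mul, abs_of_nonneg (hg n)]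
  -- FULL lemma
  have hfull : ∀ (j j₁ j₂ n₁ n₂ : ℕ), n₁ ∈ T → n₁ ∈ J j₁ → 0 < g n₁ → j₁ / 2 ∈ N →
      n₂ ∈ T → n₂ ∈ J j₂ → j₁ < j → j < j₂ → t j = c j := by
    intro j j₁ j₂ n₁ n₂ hn₁T hn₁J hgn₁ hused₁ hn₂T hn₂J h1 h2
    have hsub : J j ⊆ T := by
      intro n hn
      have hna : a ≤ n :=
        le_trans (Finset.mem_Icc.mp (Finset.mem_sdiff.mp hn₁T).1).1
          (le_of_lt (aux_lt hJ h1 hn₁J hn))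
      have hnb : n ≤ b :=
        le_trans (le_of_lt (aux_lt hJ h2 hn hn₂J))
          (Finset.mem_Icc.mp (Finset.mem_sdiff.mp hn₂T).1).2
      rw [hT, Finset.mem_sdiff, Finset.mem_Icc]
      refine ⟨⟨hna, hnb⟩, ?_⟩
      intro hnA
      have hge : |f n₁| ≤ |f n| := hA n hnA n₁ (Finset.mem_sdiff.mp hn₁T).2
      rw [hfabs_used hn₁J hused₁] at hge
      have h3 : |f n| ≤ g n := habs n
      have hlt : g n < g n₁ := aux_val_lt hJ hw hwpos h1 hn₁J (ne_of_gt hgn₁) hn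
      linarith
    show (∑ n ∈ T ∩ J j, g n) = c j
    rw [Finset.inter_eq_right.mpr hsub]
    rfl
  -- decomposition
  have hdecomp : oneStar f T = ∑ k ∈ Finset.range (b + 1),
      (if k ∈ N then t (2 * k) - t (2 * k + 1) else 0) := by
    have h1 : oneStar f T = ∑ j ∈ Finset.range (2 * (b + 1)), ∑ n ∈ T ∩ J j, f n := by
      have h2 : ∀ j, (∑ n ∈ T ∩ J j, f n) = ∑ n ∈ T, if n ∈ J j then f n else 0 := by
        intro j
        rw [← Finset.filter_mem_eq_inter, Finset.sum_filter]
      simp_rw [h2]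
      rw [Finset.sum_comm]
      rw [oneStar]
      apply Finset.sum_congr rfl
      intro n hn
      by_cases hex : ∃ j, n ∈ J j
      · obtain ⟨j, hj⟩ := hex
        rw [Finset.sum_eq_single j]
        · rw [if_pos hj]
        · intro j' _ hj'
          rw [if_neg]
          intro hmem
          exact hj' (aux_unique hJ hmem hj)
        · intro hjr
          exfalso
          apply hjr
          rw [Finset.mem_range]
          have hjn : j ≤ n := aux_le hJ hj
          have hnb : n ≤ b := (Finset.mem_Icc.mp (Finset.mem_sdiff.mp hn).1).2
          omega
      · rw [Finset.sum_eq_zero (fun j _ => if_neg (fun hmem => hex ⟨j, hmem⟩))]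
        have hr : rhoN J N n = 0 := rhoN_notmem (fun j hmem => hex ⟨j, hmem⟩) N
        show f n = 0
        rw [hf]
        show rhoN J N n * g n = 0
        rw [hr, zero_mul]
    have h3 : ∀ j, (∑ n ∈ T ∩ J j, f n) = sgnN N j * t j := by
      intro j
      rw [htdef]
      show _ = sgnN N j * ∑ n ∈ T ∩ J j, g n
      rw [Finset.mul_sum]
      apply Finset.sum_congr rfl
      intro n hn
      show f n = sgnN N j * g n
      rw [hf]
      show rhoN J N n * g n = sgnN N j * g n
      rw [rhoN_mem hJ N (Finset.mem_inter.mp hn).2]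
    rw [h1]
    simp_rw [h3]
    rw [sum_range_pair (fun j => sgnN N j * t j) (b + 1)]
    apply Finset.sum_congr rfl
    intro k _
    rw [sgnN_even, sgnN_odd]
    by_cases hkN : k ∈ N
    · rw [if_pos hkN, if_pos hkN, if_pos hkN]; ring
    · rw [if_neg hkN, if_neg hkN, if_neg hkN]; ring
  -- the finset of active pairs
  set P : Finset ℕ := (Finset.range (b + 1)).filter
      (fun k => k ∈ N ∧ (t (2 * k) ≠ 0 ∨ t (2 * k + 1) ≠ 0)) with hPdef
  have hsumP : oneStar f T = ∑ k ∈ P, (t (2 * k) - t (2 * k + 1)) := by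
    rw [hdecomp]
    have hside : ∀ k ∈ Finset.range (b + 1), k ∉ P →
        (if k ∈ N then t (2 * k) - t (2 * k + 1) else 0) = 0 := by
      intro k hk hknP
      by_cases hkN : k ∈ N
      · have h20 : t (2 * k) = 0 := by
          by_contra h
          exact hknP (Finset.mem_filter.mpr ⟨hk, hkN, Or.inl h⟩)
        have h21 : t (2 * k + 1) = 0 := by
          by_contra h
          exact hknP (Finset.mem_filter.mpr ⟨hk, hkN, Or.inr h⟩)
        rw [if_pos hkN, h20, h21, sub_zero]
      · rw [if_neg hkN]
    rw [← Finset.sum_subset (Finset.filter_subset _ _) hside]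
    apply Finset.sum_congr rfl
    intro k hk
    rw [if_pos (Finset.mem_filter.mp hk).2.1]
  by_cases hPne : P.Nonempty
  case neg =>
    rw [hsumP, Finset.not_nonempty_iff_eq_empty.mp hPne, Finset.sum_empty, abs_zero]
    exact le_of_lt hc0pos
  set kmin : ℕ := P.min' hPne with hkmin
  set kmax : ℕ := P.max' hPne with hkmax
  have hkminP : kmin ∈ P := P.min'_mem hPne
  have hkmaxP : kmax ∈ P := P.max'_mem hPne
  have hwitpair : ∀ k ∈ P, ∃ n j, n ∈ T ∧ n ∈ J j ∧ 0 < g n ∧ j / 2 ∈ N ∧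
      2 * k ≤ j ∧ j ≤ 2 * k + 1 := by
    intro k hk
    obtain ⟨_, hkN, hor⟩ := Finset.mem_filter.mp hk
    rcases hor with h | h
    · obtain ⟨n, hnT, hnJ, hgn⟩ := ht_wit _ h
      refine ⟨n, 2 * k, hnT, hnJ, hgn, ?_, le_refl _, by omega⟩
      have h2 : 2 * k / 2 = k := by omega
      rw [h2]; exact hkN
    · obtain ⟨n, hnT, hnJ, hgn⟩ := ht_wit _ h
      refine ⟨n, 2 * k + 1, hnT, hnJ, hgn, ?_, by omega, le_refl _⟩
      have h2 : (2 * k + 1) / 2 = k := by omega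
      rw [h2]; exact hkN
  -- lower bound
  have hd_other_nonneg : ∀ k ∈ P, k ≠ kmin → 0 ≤ t (2 * k) - t (2 * k + 1) := by
    intro k hk hkne
    have hklt : kmin < k := lt_of_le_of_ne (P.min'_le k hk) (Ne.symm hkne)
    by_cases hz : t (2 * k + 1) = 0
    · rw [hz, sub_zero]; exact ht_nonneg _
    · obtain ⟨n₂, hn₂T, hn₂J, _⟩ := ht_wit _ hz
      obtain ⟨n₁, j₁, hn₁T, hn₁J, hgn₁, hu₁, _, hj₁b⟩ := hwitpair kmin hkminP
      have hfullk : t (2 * k) = c (2 * k) :=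
        hfull (2 * k) j₁ (2 * k + 1) n₁ n₂ hn₁T hn₁J hgn₁ hu₁ hn₂T hn₂J (by omega) (by omega)
      have h1 : t (2 * k + 1) ≤ c (2 * k + 1) := ht_le _
      have h2 : c (2 * k + 1) ≤ c (2 * k) := hcanti (by omega)
      rw [hfullk]
      linarith
  have hlower : -(c 0) ≤ ∑ k ∈ P, (t (2 * k) - t (2 * k + 1)) := by
    rw [← Finset.add_sum_erase P _ hkminP]
    have h2 : 0 ≤ ∑ k ∈ P.erase kmin, (t (2 * k) - t (2 * k + 1)) :=
      Finset.sum_nonneg (fun k hk =>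
        hd_other_nonneg k (Finset.mem_of_mem_erase hk) (Finset.ne_of_mem_erase hk))
    have h3 : t (2 * kmin + 1) ≤ c 0 := le_trans (ht_le _) (hcanti (by omega))
    have h4 := ht_nonneg (2 * kmin)
    linarith
  -- upper bound
  have hupper : ∑ k ∈ P, (t (2 * k) - t (2 * k + 1)) ≤ c 0 := by
    by_cases heq : kmin = kmax
    · have hPsing : P = {kmin} := by
        apply Finset.eq_singleton_iff_unique_mem.mpr
        refine ⟨hkminP, fun k hk => le_antisymm ?_ (P.min'_le k hk)⟩
        rw [heq]
        exact P.le_max' k hk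
      rw [hPsing, Finset.sum_singleton]
      have h1 : t (2 * kmin) ≤ c (2 * kmin) := ht_le _
      have h2 : c (2 * kmin) ≤ c 0 := hcanti (by omega)
      have h3 := ht_nonneg (2 * kmin + 1)
      linarith
    · have hklt : kmin < kmax :=
        lt_of_le_of_ne (P.min'_le kmax hkmaxP) heq
      have hd_le_h : ∀ k ∈ P.erase kmax,
          t (2 * k) - t (2 * k + 1) ≤ c (2 * k) - c (2 * (k + 1)) := by
        intro k hk
        have hkP := Finset.mem_of_mem_erase hk
        have hkltmax : k < kmax :=
          lt_of_le_of_ne (P.le_max' k hkP) (Finset.ne_of_mem_erase hk)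
        have hstep : c (2 * (k + 1)) ≤ c (2 * k + 1) := hcanti (by omega)
        by_cases hz : t (2 * k) = 0
        · have h1 := ht_nonneg (2 * k + 1)
          have h2 : c (2 * (k + 1)) ≤ c (2 * k) := hcanti (by omega)
          rw [hz]
          linarith
        · obtain ⟨n₁, hn₁T, hn₁J, hgn₁⟩ := ht_wit _ hz
          obtain ⟨n₂, j₂, hn₂T, hn₂J, _, _, hj₂a, _⟩ := hwitpair kmax hkmaxP
          have hu₁ : 2 * k / 2 ∈ N := by
            have h2 : 2 * k / 2 = k := by omega
            rw [h2]; exact (Finset.mem_filter.mp hkP).2.1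
          have hfullk : t (2 * k + 1) = c (2 * k + 1) :=
            hfull (2 * k + 1) (2 * k) j₂ n₁ n₂ hn₁T hn₁J hgn₁ hu₁ hn₂T hn₂J (by omega)
              (by omega)
          have h1 : t (2 * k) ≤ c (2 * k) := ht_le _
          rw [hfullk]
          linarith
      have htel : ∑ k ∈ P.erase kmax, (c (2 * k) - c (2 * (k + 1))) ≤
          c (2 * kmin) - c (2 * kmax) := by
        have hsub : P.erase kmax ⊆ Finset.Ico kmin kmax := by
          intro k hk
          rw [Finset.mem_Ico]
          exact ⟨P.min'_le k (Finset.mem_of_mem_erase hk),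
            lt_of_le_of_ne (P.le_max' k (Finset.mem_of_mem_erase hk))
              (Finset.ne_of_mem_erase hk)⟩
        calc ∑ k ∈ P.erase kmax, (c (2 * k) - c (2 * (k + 1)))
            ≤ ∑ k ∈ Finset.Ico kmin kmax, (c (2 * k) - c (2 * (k + 1))) :=
              Finset.sum_le_sum_of_subset_of_nonneg hsub
                (fun k _ _ => by
                  have := hcanti (show 2 * k ≤ 2 * (k + 1) by omega)
                  linarith)
          _ = c (2 * kmin) - c (2 * kmax) := by
              rw [Finset.sum_Ico_eq_sum_range]
              simp only [Nat.add_assoc]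
              have := Finset.sum_range_sub' (fun i => c (2 * (kmin + i))) (kmax - kmin)
              rw [this]
              have h1 : kmin + (kmax - kmin) = kmax := by omega
              rw [h1, Nat.add_zero]
      rw [← Finset.sum_erase_add P _ hkmaxP]
      have h1 : ∑ k ∈ P.erase kmax, (t (2 * k) - t (2 * k + 1)) ≤
          c (2 * kmin) - c (2 * kmax) :=
        le_trans (Finset.sum_le_sum hd_le_h) htel
      have h2 : t (2 * kmax) ≤ c (2 * kmax) := ht_le _
      have h3 := ht_nonneg (2 * kmax + 1)
      have h4 : c (2 * kmin) ≤ c 0 := hcanti (by omega)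
      linarith
  rw [hsumP]
  exact abs_le.mpr ⟨hlower, hupper⟩

end MyCore

section MyFinal

variable {g : ℕ → ℝ} {J : ℕ → Finset ℕ} {w : ℝ}

lemma aux_bnorm_le (hg : ∀ n, 0 ≤ g n) (hJ : Admissible g J)
    (hw : Tendsto (fun k => oneStar g (J k)) atTop (nhds w)) (hwpos : 0 < w) (N : Set ℕ) :
    BNorm (fun n => rhoN J N n * g n) ≤ ENNReal.ofReal (oneStar g (J 0)) := by
  rw [BNorm]
  refine iSup₂_le fun A hA => ?_
  rw [beta]
  refine iSup_le fun a => iSup_le fun b => ?_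
  exact ENNReal.ofReal_le_ofReal (aux_core hg hJ hw hwpos N A hA a b)

lemma aux_bnorm_ge (hg : ∀ n, 0 ≤ g n) (hJ : Admissible g J)
    (hw : Tendsto (fun k => oneStar g (J k)) atTop (nhds w))
    {N M : Set ℕ} {k : ℕ} (hk : (k ∈ N ∧ k ∉ M) ∨ (k ∉ N ∧ k ∈ M)) :
    ENNReal.ofReal w ≤ BNorm (fun n => rhoN J N n * g n - rhoN J M n * g n) := by
  set D : ℕ → ℝ := fun n => rhoN J N n * g n - rhoN J M n * g n with hD
  have hgr : GreedySet D ∅ := fun n hn => absurd hn (Finset.notMem_empty n)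
  obtain ⟨a, b, hab, hJk⟩ := hJ.1.1 (2 * k)
  have hsum : |oneStar D (Finset.Icc a b \ ∅)| = oneStar g (J (2 * k)) := by
    rw [Finset.sdiff_empty, ← hJk]
    have hcongr : ∀ n ∈ J (2 * k), D n = (sgnN N (2 * k) - sgnN M (2 * k)) * g n := by
      intro n hn
      show rhoN J N n * g n - rhoN J M n * g n = _
      rw [rhoN_mem hJ N hn, rhoN_mem hJ M hn]
      ring
    rw [oneStar, Finset.sum_congr rfl hcongr, ← Finset.mul_sum]
    have hnn : (0:ℝ) ≤ ∑ n ∈ J (2 * k), g n := Finset.sum_nonneg fun n _ => hg n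
    rw [sgnN_even, sgnN_even]
    rcases hk with ⟨h1, h2⟩ | ⟨h1, h2⟩
    · rw [if_pos h1, if_neg h2]
      show |(1 - 0) * ∑ n ∈ J (2 * k), g n| = _
      rw [sub_zero, one_mul, abs_of_nonneg hnn]
      rfl
    · rw [if_neg h1, if_pos h2]
      show |(0 - 1) * ∑ n ∈ J (2 * k), g n| = _
      rw [zero_sub, neg_one_mul, abs_neg, abs_of_nonneg hnn]
      rfl
  have h1 : ENNReal.ofReal w ≤ ENNReal.ofReal |oneStar D (Finset.Icc a b \ ∅)| := by
    rw [hsum]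
    exact ENNReal.ofReal_le_ofReal (aux_w_le hJ hw (2 * k))
  have h2 : ENNReal.ofReal |oneStar D (Finset.Icc a b \ ∅)| ≤ beta D ∅ := by
    rw [beta]
    exact le_iSup₂ (f := fun x y => ENNReal.ofReal |oneStar D (Finset.Icc x y \ ∅)|) a b
  have h3 : beta D ∅ ≤ BNorm D := by
    rw [BNorm]
    exact le_iSup₂ (f := fun A (_ : A ∈ {A : Finset ℕ | GreedySet D A}) => beta D A) ∅ hgr
  exact h1.trans (h2.trans h3)


/-- if `g ≥ 0` is Leibnizian with admissible sequence `J` and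
`ω(g,J) = w > 0`, then there is a family `(ρ_N)_{N ⊆ ℕ}` in the unit ball of `ℓ_∞`
with `‖M_{ρ_N}(g)‖_𝔹 ≤ α(g,J)` and `‖M_{ρ_N}(g) − M_{ρ_M}(g)‖_𝔹 ≥ w` for `N ≠ M`;
in particular `{M_{ρ_N}(g) : N ⊆ ℕ}` is uncountable. -/
theorem stmt_8 (g : ℕ → ℝ) (hg : ∀ n, 0 ≤ g n) (J : ℕ → Finset ℕ)
    (hJ : Admissible g J) (w : ℝ)
    (hw : Filter.Tendsto (fun k => oneStar g (J k)) Filter.atTop (nhds w))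
    (hwpos : 0 < w) :
    ∃ ρ : Set ℕ → (ℕ → ℝ),
      (∀ N n, |ρ N n| ≤ 1) ∧
      (∀ N : Set ℕ, BNorm (fun n => ρ N n * g n) ≤ ENNReal.ofReal (oneStar g (J 0))) ∧
      (∀ N M : Set ℕ, N ≠ M →
        ENNReal.ofReal w ≤ BNorm (fun n => ρ N n * g n - ρ M n * g n)) ∧
      ¬ (Set.range fun N : Set ℕ => (fun n => ρ N n * g n)).Countable := by
  have hdiff : ∀ (N M : Set ℕ), N ≠ M → ∃ k, (k ∈ N ∧ k ∉ M) ∨ (k ∉ N ∧ k ∈ M) := by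
    intro N M hNM
    by_contra h
    push_neg at h
    apply hNM
    ext k
    have := h k
    tauto
  have hlow : ∀ N M : Set ℕ, N ≠ M →
      ENNReal.ofReal w ≤ BNorm (fun n => rhoN J N n * g n - rhoN J M n * g n) := by
    intro N M hNM
    obtain ⟨k, hk⟩ := hdiff N M hNM
    exact aux_bnorm_ge hg hJ hw hk
  refine ⟨fun N => rhoN J N, fun N n => rhoN_abs_le J N n,
    fun N => aux_bnorm_le hg hJ hw hwpos N, hlow, ?_⟩
  intro hC
  have hB0 : BNorm (fun _ : ℕ => (0:ℝ)) = 0 := by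
    rw [BNorm]
    refine le_antisymm (iSup₂_le fun A hA => ?_) zero_le
    rw [beta]
    refine iSup_le fun a => iSup_le fun b => ?_
    simp [oneStar]
  have hinj : Function.Injective (fun N : Set ℕ => (fun n => rhoN J N n * g n)) := by
    intro N M hFNM
    by_contra hne
    have h1 := hlow N M hne
    have h2 : (fun n => rhoN J N n * g n - rhoN J M n * g n) = fun _ => (0:ℝ) := by
      funext n
      rw [sub_eq_zero]
      exact congrFun hFNM n
    rw [h2, hB0] at h1
    rw [nonpos_iff_eq_zero, ENNReal.ofReal_eq_zero] at h1
    linarith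
  have hC2 : Countable (Set.range (fun N : Set ℕ => (fun n => rhoN J N n * g n))) :=
    hC.to_subtype
  have hcount : Countable (Set ℕ) := by
    have hi2 : Function.Injective
        (fun N : Set ℕ => (⟨_, Set.mem_range_self N⟩ :
          Set.range (fun N : Set ℕ => (fun n => rhoN J N n * g n)))) := by
      intro N M h
      exact hinj (congrArg Subtype.val h)
    exact hi2.countable
  obtain ⟨e, he⟩ := Countable.exists_injective_nat (Set ℕ)
  exact Function.cantor_injective e he
end MyFinal
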